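/- On the symmetric element [−h, h] with interior point 0, consider the constant-coefficient eigenproblem f u'' = λ u (f > 0 constant) with boundary conditions: continuity at 0, u(±h) = u(0), and u'(h) − u'(0⁺) + u'(0⁻) − u'(−h) = 0. Then for each even integer n ≥ 2, setting k = nπ/h, the three functions cos(k x), sin(k x), and sin(k|x|) all satisfy the eigenproblem with eigenvalue λ = −f k², and they are pairwise orthogonal in L²(−h,h). -/

import Mathlib

lemma hdcos (k x : ℝ) : HasDerivAt (fun y => Real.cos (k*y)) (-(k * Real.sin (k*x))) x := by
  have hk' : HasDerivAt (fun y : ℝ => k * y) k x := by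
    simpa using (hasDerivAt_id x).const_mul k
  simpa [mul_comm, Function.comp_def] using (Real.hasDerivAt_cos (k*x)).comp x hk'

lemma hdsin (k x : ℝ) : HasDerivAt (fun y => Real.sin (k*y)) (k * Real.cos (k*x)) x := by
  have hk' : HasDerivAt (fun y : ℝ => k * y) k x := by
    simpa using (hasDerivAt_id x).const_mul k
  simpa [mul_comm, Function.comp_def] using (Real.hasDerivAt_sin (k*x)).comp x hk'

lemma dcos_eq (k : ℝ) : deriv (fun y => Real.cos (k*y)) = fun x => -(k * Real.sin (k*x)) :=
  funext fun x => (hdcos k x).deriv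

lemma dsin_eq (k : ℝ) : deriv (fun y => Real.sin (k*y)) = fun x => k * Real.cos (k*x) :=
  funext fun x => (hdsin k x).deriv

lemma ddcos (k x : ℝ) : deriv (deriv (fun y => Real.cos (k*y))) x = -(k^2 * Real.cos (k*x)) := by
  rw [dcos_eq]
  have : HasDerivAt (fun x => -(k * Real.sin (k*x))) (-(k * (k * Real.cos (k*x)))) x :=
    ((hdsin k x).const_mul k).neg
  rw [this.deriv]; ring

lemma ddsin (k x : ℝ) : deriv (deriv (fun y => Real.sin (k*y))) x = -(k^2 * Real.sin (k*x)) := by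
  rw [dsin_eq]
  have : HasDerivAt (fun x => k * Real.cos (k*x)) (k * -(k * Real.sin (k*x))) x :=
    (hdcos k x).const_mul k
  rw [this.deriv]; ring

lemma ddnegsin (k x : ℝ) : deriv (deriv (fun y => -Real.sin (k*y))) x = k^2 * Real.sin (k*x) := by
  have d1 : deriv (fun y => -Real.sin (k*y)) = fun x => -(k * Real.cos (k*x)) :=
    funext fun x => ((hdsin k x).neg).deriv
  rw [d1]
  have : HasDerivAt (fun x => -(k * Real.cos (k*x))) (-(k * -(k * Real.sin (k*x)))) x :=
    ((hdcos k x).const_mul k).neg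
  rw [this.deriv]; ring


open Real in
/-- On the symmetric element `[−h,h]`, for even `n ≥ 2` and `k = nπ/h`, the
three modes `cos(kx)`, `sin(kx)` and `sin(k|x|)` satisfy the constant
coefficient eigenproblem `f u'' = −f k² u` with the insulating coupling
boundary conditions, and are pairwise orthogonal in `L²(−h,h)`. -/
theorem stmt4 (h f : ℝ) (hh : 0 < h) (hf : 0 < f)
    (n : ℕ) (hn : 2 ≤ n) (hne : Even n) (k : ℝ) (hk : k = n * π / h) :
    -- eigen-equations (for `sin(k|x|)` away from the kink at 0)
    (∀ x : ℝ, f * deriv (deriv (fun y => cos (k * y))) x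
        = -(f * k^2) * cos (k * x))
    ∧ (∀ x : ℝ, f * deriv (deriv (fun y => sin (k * y))) x
        = -(f * k^2) * sin (k * x))
    ∧ (∀ x : ℝ, x ≠ 0 → f * deriv (deriv (fun y => sin (k * |y|))) x
        = -(f * k^2) * sin (k * |x|))
    -- value conditions u(±h) = u(0)
    ∧ (cos (k * h) = cos (k * 0) ∧ cos (k * (-h)) = cos (k * 0))
    ∧ (sin (k * h) = sin (k * 0) ∧ sin (k * (-h)) = sin (k * 0))
    ∧ (sin (k * |h|) = sin (k * |(0:ℝ)|) ∧ sin (k * |(-h)|) = sin (k * |(0:ℝ)|))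
    -- derivative (flux) conditions u'(h) − u'(0⁺) + u'(0⁻) − u'(−h) = 0
    ∧ (deriv (fun y => cos (k * y)) h
        - derivWithin (fun y => cos (k * y)) (Set.Ici 0) 0
        + derivWithin (fun y => cos (k * y)) (Set.Iic 0) 0
        - deriv (fun y => cos (k * y)) (-h) = 0)
    ∧ (deriv (fun y => sin (k * y)) h
        - derivWithin (fun y => sin (k * y)) (Set.Ici 0) 0
        + derivWithin (fun y => sin (k * y)) (Set.Iic 0) 0
        - deriv (fun y => sin (k * y)) (-h) = 0)
    ∧ (deriv (fun y => sin (k * |y|)) h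
        - derivWithin (fun y => sin (k * |y|)) (Set.Ici 0) 0
        + derivWithin (fun y => sin (k * |y|)) (Set.Iic 0) 0
        - deriv (fun y => sin (k * |y|)) (-h) = 0)
    -- pairwise orthogonality in L²(−h,h)
    ∧ (∫ x in (-h)..h, cos (k * x) * sin (k * x)) = 0
    ∧ (∫ x in (-h)..h, cos (k * x) * sin (k * |x|)) = 0
    ∧ (∫ x in (-h)..h, sin (k * x) * sin (k * |x|)) = 0 := by
  obtain ⟨m, hm⟩ := hne
  have kh : k * h = n * π := by rw [hk]; field_simp
  have sinkh : sin (k * h) = 0 := by rw [kh]; exact Real.sin_nat_mul_pi n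
  have coskh : cos (k * h) = 1 := by
    have : (n : ℝ) * π = m * (2 * π) := by rw [hm]; push_cast; ring
    rw [kh, this, Real.cos_nat_mul_two_pi]
  have kpos : 0 < k := by
    rw [hk]
    have : (0:ℝ) < n := by exact_mod_cast Nat.lt_of_lt_of_le (by norm_num) hn
    positivity
  have kne : k ≠ 0 := kpos.ne'
  -- eventual equalities for sin(k|x|)
  have habs_pos : ∀ x : ℝ, 0 < x →
      (fun y => Real.sin (k * |y|)) =ᶠ[nhds x] (fun y => Real.sin (k * y)) := fun x hx => by
    filter_upwards [Ioi_mem_nhds hx] with y hy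
    rw [abs_of_pos hy]
  have habs_neg : ∀ x : ℝ, x < 0 →
      (fun y => Real.sin (k * |y|)) =ᶠ[nhds x] (fun y => -Real.sin (k * y)) := fun x hx => by
    filter_upwards [Iio_mem_nhds hx] with y hy
    rw [abs_of_neg hy, mul_neg, Real.sin_neg]
  refine ⟨fun x => ?_, fun x => ?_, fun x hx => ?_, ?_, ?_, ?_, ?_, ?_, ?_, ?_, ?_, ?_⟩
  · rw [ddcos]; ring
  · rw [ddsin]; ring
  · rcases hx.lt_or_gt with hx | hx
    · rw [((habs_neg x hx).deriv).deriv_eq, ddnegsin, abs_of_neg hx, mul_neg, Real.sin_neg]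
      ring
    · rw [((habs_pos x hx).deriv).deriv_eq, ddsin, abs_of_pos hx]
      ring
  · constructor
    · rw [coskh]; simp
    · rw [mul_neg, Real.cos_neg, coskh]; simp
  · constructor
    · rw [sinkh]; simp
    · rw [mul_neg, Real.sin_neg, sinkh]; simp
  · constructor
    · rw [abs_of_pos hh, sinkh]; simp
    · rw [abs_neg, abs_of_pos hh, sinkh]; simp
  · -- cos flux
    rw [dcos_eq, (hdcos k 0).hasDerivWithinAt.derivWithin (uniqueDiffOn_Ici 0 0 Set.self_mem_Ici),
      (hdcos k 0).hasDerivWithinAt.derivWithin (uniqueDiffOn_Iic 0 0 Set.self_mem_Iic)]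
    simp [sinkh, mul_neg, Real.sin_neg]
  · -- sin flux
    rw [dsin_eq, (hdsin k 0).hasDerivWithinAt.derivWithin (uniqueDiffOn_Ici 0 0 Set.self_mem_Ici),
      (hdsin k 0).hasDerivWithinAt.derivWithin (uniqueDiffOn_Iic 0 0 Set.self_mem_Iic)]
    simp
  · -- abs flux
    have d1 : deriv (fun y => Real.sin (k * |y|)) h = k * Real.cos (k * h) := by
      rw [(habs_pos h hh).deriv_eq, (hdsin k h).deriv]
    have d2 : deriv (fun y => Real.sin (k * |y|)) (-h) = -(k * Real.cos (k * (-h))) := by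
      rw [(habs_neg (-h) (neg_neg_iff_pos.mpr hh)).deriv_eq, (show HasDerivAt (fun y => -Real.sin (k*y)) _ (-h) from (hdsin k (-h)).neg).deriv]
    have d3 : derivWithin (fun y => Real.sin (k * |y|)) (Set.Ici 0) 0 = k * Real.cos (k * 0) := by
      have e : derivWithin (fun y => Real.sin (k * |y|)) (Set.Ici 0) 0
          = derivWithin (fun y => Real.sin (k * y)) (Set.Ici 0) 0 :=
        derivWithin_congr (fun y hy => by simp [abs_of_nonneg (Set.mem_Ici.mp hy)]) (by simp)
      rw [e]
      exact (hdsin k 0).hasDerivWithinAt.derivWithin (uniqueDiffOn_Ici 0 0 Set.self_mem_Ici)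
    have d4 : derivWithin (fun y => Real.sin (k * |y|)) (Set.Iic 0) 0
        = -(k * Real.cos (k * 0)) := by
      have e : derivWithin (fun y => Real.sin (k * |y|)) (Set.Iic 0) 0
          = derivWithin (fun y => -Real.sin (k * y)) (Set.Iic 0) 0 :=
        derivWithin_congr
          (fun y hy => by simp [abs_of_nonpos (Set.mem_Iic.mp hy), mul_neg, Real.sin_neg]) (by simp)
      rw [e]
      exact ((hdsin k 0).neg).hasDerivWithinAt.derivWithin (uniqueDiffOn_Iic 0 0 Set.self_mem_Iic)
    rw [d1, d2, d3, d4, mul_neg, Real.cos_neg, coskh, mul_zero, Real.cos_zero]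
    ring
  · -- integral 1
    rw [show (fun x => Real.cos (k*x) * Real.sin (k*x))
        = fun x => (fun t => Real.sin t * Real.cos t) (k * x) from funext fun x => mul_comm _ _,
      intervalIntegral.integral_comp_mul_left (fun t => Real.sin t * Real.cos t) kne,
      integral_sin_mul_cos₁]
    simp [sinkh, mul_neg, Real.sin_neg]
  · -- integral 2
    have i1 : IntervalIntegrable (fun x => Real.cos (k*x) * Real.sin (k*|x|)) MeasureTheory.volume (-h) 0 := by
      apply Continuous.intervalIntegrable; fun_prop
    have i2 : IntervalIntegrable (fun x => Real.cos (k*x) * Real.sin (k*|x|)) MeasureTheory.volume 0 h := by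
      apply Continuous.intervalIntegrable; fun_prop
    rw [← intervalIntegral.integral_add_adjacent_intervals i1 i2]
    have e1 : (∫ x in (-h)..(0:ℝ), Real.cos (k*x) * Real.sin (k*|x|))
        = ∫ x in (-h)..(0:ℝ), -((fun t => Real.sin t * Real.cos t) (k * x)) := by
      apply intervalIntegral.integral_congr
      intro x hx
      rw [Set.uIcc_of_le (by linarith : -h ≤ (0:ℝ))] at hx
      simp only [abs_of_nonpos hx.2, mul_neg, Real.sin_neg]; ring
    have e2 : (∫ x in (0:ℝ)..h, Real.cos (k*x) * Real.sin (k*|x|))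
        = ∫ x in (0:ℝ)..h, (fun t => Real.sin t * Real.cos t) (k * x) := by
      apply intervalIntegral.integral_congr
      intro x hx
      rw [Set.uIcc_of_le hh.le] at hx
      simp only [abs_of_nonneg hx.1]; ring
    rw [e1, e2, intervalIntegral.integral_neg,
      intervalIntegral.integral_comp_mul_left (fun t => Real.sin t * Real.cos t) kne,
      intervalIntegral.integral_comp_mul_left (fun t => Real.sin t * Real.cos t) kne,
      integral_sin_mul_cos₁, integral_sin_mul_cos₁]
    simp [sinkh, mul_neg, Real.sin_neg, smul_eq_mul]
  · -- integral 3
    have i1 : IntervalIntegrable (fun x => Real.sin (k*x) * Real.sin (k*|x|)) MeasureTheory.volume (-h) 0 := by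
      apply Continuous.intervalIntegrable; fun_prop
    have i2 : IntervalIntegrable (fun x => Real.sin (k*x) * Real.sin (k*|x|)) MeasureTheory.volume 0 h := by
      apply Continuous.intervalIntegrable; fun_prop
    rw [← intervalIntegral.integral_add_adjacent_intervals i1 i2]
    have e1 : (∫ x in (-h)..(0:ℝ), Real.sin (k*x) * Real.sin (k*|x|))
        = ∫ x in (-h)..(0:ℝ), -((fun t => Real.sin t ^ 2) (k * x)) := by
      apply intervalIntegral.integral_congr
      intro x hx
      rw [Set.uIcc_of_le (by linarith : -h ≤ (0:ℝ))] at hx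
      simp only [abs_of_nonpos hx.2, mul_neg, Real.sin_neg]; ring
    have e2 : (∫ x in (0:ℝ)..h, Real.sin (k*x) * Real.sin (k*|x|))
        = ∫ x in (0:ℝ)..h, (fun t => Real.sin t ^ 2) (k * x) := by
      apply intervalIntegral.integral_congr
      intro x hx
      rw [Set.uIcc_of_le hh.le] at hx
      simp only [abs_of_nonneg hx.1]; ring
    rw [e1, e2, intervalIntegral.integral_neg,
      intervalIntegral.integral_comp_mul_left (fun t => Real.sin t ^ 2) kne,
      intervalIntegral.integral_comp_mul_left (fun t => Real.sin t ^ 2) kne,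
      integral_sin_sq, integral_sin_sq]
    simp only [mul_neg, mul_zero, Real.sin_neg, Real.cos_neg, Real.sin_zero, Real.cos_zero, sinkh,
      smul_eq_mul, neg_zero, zero_mul, mul_one, neg_neg, sub_zero, zero_sub, zero_add]
    ring
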